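/- Let (ν_x, ν_o) be jointly Gaussian with means (μ_x, μ_o) and positive definite covariance [[K_xx, K_xo],[K_xo, K_oo]], and let n_x, n_o be independent N(0, σ²), independent of (ν_x, ν_o). Define v = K_xx + 2σ² + K_oo − 2K_xo and assume v > 0. Then E[ν_x · 1_{ν_x + n_x > ν_o + n_o}] = μ_x·(1 − Φ((μ_o − μ_x)/√v)) + ((K_xx − K_xo)/√v)·φ((μ_o − μ_x)/√v). -/

import Mathlib

open Real MeasureTheory ProbabilityTheory Set Filter
open scoped NNReal ENNReal

/-- The standard normal probability density function. -/
noncomputable def stdNormalPDF (x : ℝ) : ℝ := Real.exp (-x ^ 2 / 2) / Real.sqrt (2 * Real.pi)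

/-- The standard normal cumulative distribution function. -/
noncomputable def stdNormalCDF (t : ℝ) : ℝ := ∫ s in Set.Iic t, stdNormalPDF s

lemma phi_eq (x : ℝ) : stdNormalPDF x = Real.exp (-(1/2) * x ^ 2) * (Real.sqrt (2 * Real.pi))⁻¹ := by
  rw [stdNormalPDF]; ring_nf

lemma continuous_phi : Continuous stdNormalPDF := by
  unfold stdNormalPDF; fun_prop

lemma phi_even (x : ℝ) : stdNormalPDF (-x) = stdNormalPDF x := by
  simp [stdNormalPDF]

lemma int_phi : Integrable stdNormalPDF := by
  simp only [funext phi_eq]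
  exact (integrable_exp_neg_mul_sq (by norm_num : (0:ℝ) < 1/2)).mul_const _

lemma int_xphi : Integrable (fun x => x * stdNormalPDF x) := by
  simp only [funext phi_eq]
  have := (integrable_mul_exp_neg_mul_sq (by norm_num : (0:ℝ) < 1/2)).mul_const (Real.sqrt (2 * Real.pi))⁻¹
  convert this using 2 with x; ring

lemma integral_phi : ∫ x, stdNormalPDF x = 1 := by
  simp only [funext phi_eq]
  rw [integral_mul_const, integral_gaussian, mul_inv_eq_one₀ (by positivity),
    show π / (1/2) = 2 * π by ring]

lemma hasDerivAt_phi (x : ℝ) : HasDerivAt stdNormalPDF (-x * stdNormalPDF x) x := by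
  simp only [funext phi_eq]
  have h1 : HasDerivAt (fun y : ℝ => -(1/2) * y ^ 2) (-x) x := by
    have := (hasDerivAt_pow 2 x).const_mul (-(1/2) : ℝ)
    exact this.congr_deriv (by push_cast; ring)
  have := (h1.exp).mul_const (Real.sqrt (2 * Real.pi))⁻¹
  exact this.congr_deriv (by ring)

lemma hasDerivAt_Phi (t : ℝ) : HasDerivAt stdNormalCDF (stdNormalPDF t) t := by
  have key : ∀ u : ℝ, stdNormalCDF u = (∫ x in (0:ℝ)..u, stdNormalPDF x) + stdNormalCDF 0 := by
    intro u
    have := intervalIntegral.integral_Iic_sub_Iic (int_phi.restrict (s := Iic (0:ℝ)))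
      (int_phi.restrict (s := Iic u)) (a := (0:ℝ)) (b := u)
    unfold stdNormalCDF
    linarith [this]
  rw [funext key]
  have h := (intervalIntegral.integral_hasStrictDerivAt_right
    (int_phi.intervalIntegrable (a := (0:ℝ)) (b := t))
    (continuous_phi.stronglyMeasurableAtFilter volume (nhds t)) (continuous_phi.continuousAt (x := t))).hasDerivAt
  exact h.add_const (stdNormalCDF 0)

lemma integral_Ioi_phi (a : ℝ) : ∫ x in Ioi a, stdNormalPDF x = 1 - stdNormalCDF a := by
  have := integral_add_compl (measurableSet_Iic (a := a)) int_phi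
  rw [compl_Iic] at this
  have h2 : stdNormalCDF a + ∫ x in Ioi a, stdNormalPDF x = 1 := by
    rw [← integral_phi]; exact this
  linarith

lemma integral_Ioi_xphi (a : ℝ) : ∫ x in Ioi a, x * stdNormalPDF x = stdNormalPDF a := by
  have h := integral_Ioi_of_hasDerivAt_of_tendsto' (f := fun x => -stdNormalPDF x)
    (f' := fun x => x * stdNormalPDF x) (a := a) (m := (0:ℝ))
    (fun x _ => by have h' := (hasDerivAt_phi x).neg; simp only [neg_mul, neg_neg] at h'; exact h')
    (int_xphi.restrict (s := Ioi a)) ?_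
  · rw [h]; simp
  · have : Tendsto stdNormalPDF atTop (nhds 0) := by
      simp only [funext phi_eq]
      have h1 : Tendsto (fun x : ℝ => Real.exp (-(1/2) * x ^ 2)) atTop (nhds 0) := by
        apply Real.tendsto_exp_atBot.comp
        apply Tendsto.const_mul_atTop_of_neg (by norm_num : (-(1/2):ℝ) < 0)
        exact tendsto_pow_atTop (by norm_num)
      simpa using h1.mul_const (Real.sqrt (2 * Real.pi))⁻¹
    simpa using this.neg

lemma gaussianReal_eq_withDensity (μ : ℝ) {v : ℝ≥0} (hv : v ≠ 0) :
    gaussianReal μ v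
      = MeasureTheory.volume.withDensity (fun x => ((gaussianPDFReal μ v x).toNNReal : ℝ≥0∞)) := by
  rw [gaussianReal_of_var_ne_zero _ hv]
  rfl

lemma integral_gauss (μ : ℝ) {v : ℝ≥0} (hv : v ≠ 0) (f : ℝ → ℝ) :
    ∫ x, f x ∂(gaussianReal μ v) = ∫ x, gaussianPDFReal μ v x * f x := by
  rw [gaussianReal_eq_withDensity μ hv,
    integral_withDensity_eq_integral_smul ((measurable_gaussianPDFReal μ v).real_toNNReal) f]
  congr 1 with x
  simp [NNReal.smul_def, Real.coe_toNNReal _ (gaussianPDFReal_nonneg μ v x)]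

lemma integrable_gauss_iff (μ : ℝ) {v : ℝ≥0} (hv : v ≠ 0) (f : ℝ → ℝ) :
    Integrable f (gaussianReal μ v) ↔ Integrable (fun x => gaussianPDFReal μ v x * f x) := by
  rw [gaussianReal_eq_withDensity μ hv,
    integrable_withDensity_iff_integrable_smul ((measurable_gaussianPDFReal μ v).real_toNNReal)]
  constructor <;> intro h <;> [skip; skip] <;>
  · apply h.congr
    filter_upwards with x
    simp [NNReal.smul_def, Real.coe_toNNReal _ (gaussianPDFReal_nonneg μ v x)]

lemma integrable_id_gauss (μ : ℝ) {v : ℝ≥0} (hv : v ≠ 0) :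
    Integrable (fun x => x) (gaussianReal μ v) := by
  rw [integrable_gauss_iff μ hv]
  have hvpos : (0:ℝ) < (v:ℝ) := by positivity
  have hbase : Integrable (fun z : ℝ => (√(2 * π * v))⁻¹ * (Real.exp (-(1/(2*v)) * z^2) * (z + μ))) := by
    apply Integrable.const_mul
    have h1 := integrable_mul_exp_neg_mul_sq (b := 1/(2*(v:ℝ))) (by positivity)
    have h2 := (integrable_exp_neg_mul_sq (b := 1/(2*(v:ℝ))) (by positivity)).const_mul μ
    apply ((h1.add h2).congr ?_)
    filter_upwards with z
    simp only [Pi.add_apply]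
    ring
  have := hbase.comp_sub_right μ
  apply this.congr
  filter_upwards with x
  rw [gaussianPDFReal]
  rw [show -(x - μ)^2 / (2*(v:ℝ)) = -(1/(2*(v:ℝ))) * (x - μ)^2 by field_simp]
  ring_nf

lemma gauss_posPart (μ V : ℝ) (hV : 0 < V) :
    ∫ x, max x 0 ∂(gaussianReal μ (Real.toNNReal V)) =
      μ * (1 - stdNormalCDF (-μ / Real.sqrt V)) + Real.sqrt V * stdNormalPDF (μ / Real.sqrt V) := by
  have hvne : (Real.toNNReal V) ≠ 0 := by
    simp [Real.toNNReal_eq_zero]; linarith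
  have hVcoe : ((Real.toNNReal V : ℝ≥0) : ℝ) = V := Real.coe_toNNReal _ hV.le
  set s := Real.sqrt V with hs_def
  have hs : 0 < s := Real.sqrt_pos.2 hV
  have hs2 : s ^ 2 = V := Real.sq_sqrt hV.le
  rw [integral_gauss μ hvne]
  set F := fun x => gaussianPDFReal μ (Real.toNNReal V) x * max x 0 with hF
  have h1 : ∫ x, F x = ∫ x, F (x + μ) := by
    rw [integral_add_right_eq_self F μ]
  have h2 : ∫ x, F (x + μ) = |s| * ∫ x, F (s * x + μ) := by
    have hcm := Measure.integral_comp_mul_left (fun y => F (y + μ)) s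
    simp only [smul_eq_mul] at hcm
    rw [show (∫ x, F (s * x + μ)) = ∫ x, (fun y => F (y + μ)) (s * x) from rfl, hcm,
      abs_of_pos hs, abs_of_pos (inv_pos.2 hs)]
    rw [← mul_assoc, mul_inv_cancel₀ (ne_of_gt hs), one_mul]
  have key : ∀ x : ℝ, s * F (s * x + μ) = stdNormalPDF x * max (s * x + μ) 0 := by
    intro x
    rw [hF]
    simp only []
    rw [gaussianPDFReal]
    rw [hVcoe, show s * x + μ - μ = s * x by ring]
    rw [show (s * x) ^ 2 = V * x ^ 2 by rw [mul_pow, hs2]]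
    rw [show 2 * π * V = (Real.sqrt (2 * π) * s)^2 by
      rw [mul_pow, Real.sq_sqrt (by positivity), hs2]]
    rw [Real.sqrt_sq (by positivity)]
    rw [stdNormalPDF]
    rw [show -(V * x ^ 2) / (2 * V) = -x^2/2 by field_simp]
    field_simp
  have h3 : |s| * ∫ x, F (s * x + μ) = ∫ x, stdNormalPDF x * max (s * x + μ) 0 := by
    rw [abs_of_pos hs, ← integral_const_mul]
    congr 1 with x
    rw [← key x]
  have h4 : (fun x => stdNormalPDF x * max (s * x + μ) 0)
      = Set.indicator (Ici (-μ/s)) (fun x => stdNormalPDF x * (s * x + μ)) := by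
    funext x
    by_cases hx : -μ/s ≤ x
    · rw [Set.indicator_of_mem (show x ∈ Ici (-μ/s) from hx)]
      congr 1
      rw [max_eq_left]
      nlinarith [(div_le_iff₀ hs).1 hx]
    · rw [Set.indicator_of_notMem (show x ∉ Ici (-μ/s) from hx)]
      push_neg at hx
      have hxs : x * s < -μ := (lt_div_iff₀ hs).1 hx
      rw [max_eq_right (by nlinarith), mul_zero]
  have h5 : ∫ x, Set.indicator (Ici (-μ/s)) (fun x => stdNormalPDF x * (s * x + μ)) x
      = ∫ x in Ioi (-μ/s), stdNormalPDF x * (s * x + μ) := by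
    rw [integral_indicator measurableSet_Ici, integral_Ici_eq_integral_Ioi]
  have h6 : ∫ x in Ioi (-μ/s), stdNormalPDF x * (s * x + μ)
      = s * stdNormalPDF (μ/s) + μ * (1 - stdNormalCDF (-μ/s)) := by
    have e1 : ∀ x : ℝ, stdNormalPDF x * (s * x + μ)
        = s * (x * stdNormalPDF x) + μ * stdNormalPDF x := fun x => by ring
    rw [funext e1, integral_add ((int_xphi.restrict).const_mul s) ((int_phi.restrict).const_mul μ),
      integral_const_mul, integral_const_mul, integral_Ioi_xphi, integral_Ioi_phi]
    rw [show -μ/s = -(μ/s) by ring, phi_even]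
  rw [h1, h2, h3, funext (fun x => congrFun h4 x), h5, h6]
  ring

lemma aemeasurable_of_map_gauss {Ω : Type*} [MeasurableSpace Ω] {P : Measure Ω} {f : Ω → ℝ}
    {μ : ℝ} {v : ℝ≥0} (h : Measure.map f P = gaussianReal μ v) : AEMeasurable f P := by
  by_contra hc
  rw [Measure.map_of_not_aemeasurable hc] at h
  have := congrArg (fun m : Measure ℝ => m Set.univ) h
  simp [measure_univ] at this

/-- `(νx, νo)` jointly Gaussian with means `(μx, μo)`, positive definite covariance
`[[Kxx, Kxo],[Kxo, Koo]]`, and `nx, no` independent `N(0,σ²)` noises independent of `(νx, νo)`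
(joint Gaussianity encoded by the law of every linear combination). With
`v = Kxx + 2σ² + Koo − 2Kxo > 0`,
`E[νx · 1_{νx + nx > νo + no}] = μx (1 − Φ((μo − μx)/√v)) + ((Kxx − Kxo)/√v) φ((μo − μx)/√v)`. -/
theorem stmt6 {Ω : Type*} [MeasurableSpace Ω] (P : Measure Ω) [IsProbabilityMeasure P]
    (νx νo nx no : Ω → ℝ) (μx μo Kxx Kxo Koo σ : ℝ)
    (hKxx : 0 < Kxx) (hKoo : 0 < Koo) (hpd : Kxo ^ 2 < Kxx * Koo)
    (hv : 0 < Kxx + 2 * σ ^ 2 + Koo - 2 * Kxo)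
    (hjoint : ∀ a b c d : ℝ,
      Measure.map (fun ω => a * νx ω + b * νo ω + c * nx ω + d * no ω) P =
        gaussianReal (a * μx + b * μo)
          (Real.toNNReal (a ^ 2 * Kxx + 2 * a * b * Kxo + b ^ 2 * Koo +
            (c ^ 2 + d ^ 2) * σ ^ 2))) :
    ∫ ω in {ω | νx ω + nx ω > νo ω + no ω}, νx ω ∂P =
      μx * (1 - stdNormalCDF ((μo - μx) / Real.sqrt (Kxx + 2 * σ ^ 2 + Koo - 2 * Kxo))) +
        ((Kxx - Kxo) / Real.sqrt (Kxx + 2 * σ ^ 2 + Koo - 2 * Kxo)) *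
          stdNormalPDF ((μo - μx) / Real.sqrt (Kxx + 2 * σ ^ 2 + Koo - 2 * Kxo)) := by
  set v : ℝ := Kxx + 2 * σ ^ 2 + Koo - 2 * Kxo with hv_def
  set c : ℝ := Kxx - Kxo with hc_def
  set m : ℝ := μx - μo with hm_def
  set W : Ω → ℝ := νx with hW_def
  set D : Ω → ℝ := fun ω => νx ω + nx ω - νo ω - no ω with hD_def
  have hq : ∀ t : ℝ, 0 < Kxx * t ^ 2 + 2 * c * t + v := by
    intro t
    nlinarith [sq_nonneg (t * Kxx + c), sq_nonneg σ, sq_nonneg (t+1), mul_pos hKxx hKoo]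
  have hsv : 0 < Real.sqrt v := Real.sqrt_pos.2 hv
  -- law of D + t W
  have hmap : ∀ t : ℝ, Measure.map (fun ω => D ω + t * W ω) P =
      gaussianReal (t * μx + m) (Real.toNNReal (Kxx * t ^ 2 + 2 * c * t + v)) := by
    intro t
    have h := hjoint (1 + t) (-1) 1 (-1)
    have hfun : (fun ω => D ω + t * W ω) =
        (fun ω => (1 + t) * νx ω + (-1) * νo ω + 1 * nx ω + (-1) * no ω) := by
      funext ω; simp only [hD_def, hW_def]; ring
    rw [hfun, h]
    congr 1
    · ring
    · congr 1; ring
  have hWmap : Measure.map W P = gaussianReal μx (Real.toNNReal Kxx) := by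
    have h := hjoint 1 0 0 0
    have hfun : W = (fun ω => 1 * νx ω + 0 * νo ω + 0 * nx ω + 0 * no ω) := by
      funext ω; simp [hW_def]
    rw [hfun, h]
    congr 1
    · ring
    · congr 1; ring
  have hDmap : Measure.map D P = gaussianReal m (Real.toNNReal v) := by
    have h := hmap 0
    have hfun : (fun ω => D ω + 0 * W ω) = D := by funext ω; ring
    rw [hfun] at h
    rw [h]
    congr 1
    · ring
    · congr 1; ring
  have hWae : AEMeasurable W P := aemeasurable_of_map_gauss hWmap
  have hDae : AEMeasurable D P := aemeasurable_of_map_gauss hDmap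
  have hKne : Real.toNNReal Kxx ≠ 0 := by
    simp [Real.toNNReal_eq_zero]; linarith
  have hvne : Real.toNNReal v ≠ 0 := by
    simp [Real.toNNReal_eq_zero]; linarith
  have hWint : Integrable W P := by
    have h0 : Integrable (fun x : ℝ => x) (Measure.map W P) := by
      rw [hWmap]; exact integrable_id_gauss _ hKne
    exact (integrable_map_measure aestronglyMeasurable_id hWae).1 h0
  have hDint : Integrable D P := by
    have h0 : Integrable (fun x : ℝ => x) (Measure.map D P) := by
      rw [hDmap]; exact integrable_id_gauss _ hvne
    exact (integrable_map_measure aestronglyMeasurable_id hDae).1 h0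
  -- the function g and its explicit formula
  set gfun : ℝ → ℝ := fun t => ∫ ω, max (D ω + t * W ω) 0 ∂P with hgfun_def
  have hg : ∀ t : ℝ, gfun t =
      (t * μx + m) * (1 - stdNormalCDF (-(t * μx + m) / Real.sqrt (Kxx * t ^ 2 + 2 * c * t + v)))
        + Real.sqrt (Kxx * t ^ 2 + 2 * c * t + v)
          * stdNormalPDF ((t * μx + m) / Real.sqrt (Kxx * t ^ 2 + 2 * c * t + v)) := by
    intro t
    have hmax : AEStronglyMeasurable (fun x : ℝ => max x 0)
        (Measure.map (fun ω => D ω + t * W ω) P) :=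
      (continuous_id.max continuous_const).aestronglyMeasurable
    have h1 : gfun t = ∫ x, max x 0 ∂(Measure.map (fun ω => D ω + t * W ω) P) := by
      rw [integral_map (aemeasurable_of_map_gauss (hmap t)) hmax]
    rw [h1, hmap t, gauss_posPart _ _ (hq t)]
  -- derivative of the explicit formula at 0
  set L : ℝ := μx * (1 - stdNormalCDF (-m / Real.sqrt v))
      + c / Real.sqrt v * stdNormalPDF (m / Real.sqrt v) with hL_def
  have hE : HasDerivAt gfun L 0 := by
    have hQd : HasDerivAt (fun t : ℝ => Kxx * t ^ 2 + 2 * c * t + v) (2 * c) 0 := by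
      have h1 := ((hasDerivAt_pow 2 (0:ℝ)).const_mul Kxx).add
        (((hasDerivAt_id (0:ℝ)).const_mul (2 * c)))
      have h2 := h1.add_const v
      exact h2.congr_deriv (by norm_num)
    have hQ0ne : Kxx * (0:ℝ) ^ 2 + 2 * c * 0 + v ≠ 0 := (hq 0).ne'
    have hSd := hQd.sqrt hQ0ne
    have hS0ne : Real.sqrt (Kxx * (0:ℝ) ^ 2 + 2 * c * 0 + v) ≠ 0 :=
      (Real.sqrt_pos.2 (hq 0)).ne'
    have hA : HasDerivAt (fun t : ℝ => t * μx + m) μx 0 := by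
      simpa using ((hasDerivAt_id (0:ℝ)).mul_const μx).add_const m
    have hRn := (hA.neg).div hSd hS0ne
    have hRp := hA.div hSd hS0ne
    have hT1 := hA.mul ((hasDerivAt_const (0:ℝ) (1:ℝ)).sub
      ((hasDerivAt_Phi _).comp 0 hRn))
    have hT2 := hSd.mul ((hasDerivAt_phi _).comp 0 hRp)
    have htot := hT1.add hT2
    rw [funext hg]
    refine htot.congr_deriv ?_
    symm
    have e0 : Kxx * (0:ℝ) ^ 2 + 2 * c * 0 + v = v := by ring
    have e1 : (0:ℝ) * μx + m = m := by ring
    have e2 : -((0:ℝ) * μx + m) = -m := by rw [e1]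
    rw [hL_def]
    simp only [Function.comp_apply, Pi.div_apply, Pi.neg_apply, Pi.sub_apply]
    simp only [e0, e1, e2]
    rw [show stdNormalPDF (-m / Real.sqrt v) = stdNormalPDF (m / Real.sqrt v) by
      rw [show -m / Real.sqrt v = -(m / Real.sqrt v) by ring, phi_even]]
    have hsne : Real.sqrt v ≠ 0 := hsv.ne'
    clear_value v c m
    generalize stdNormalCDF (-m / Real.sqrt v) = q
    generalize stdNormalPDF (m / Real.sqrt v) = p
    generalize hs : Real.sqrt v = s at hsne
    field_simp
    ring
  -- almost everywhere D ≠ 0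
  have hD0 : ∀ᵐ ω ∂P, D ω ≠ 0 := by
    have hm0 := Measure.map_apply_of_aemeasurable hDae (MeasurableSet.singleton (0:ℝ))
    rw [hDmap] at hm0
    have hz : gaussianReal m (Real.toNNReal v) {(0:ℝ)} = 0 :=
      gaussianReal_absolutelyContinuous m hvne Real.volume_singleton
    rw [hz] at hm0
    rw [ae_iff]
    rw [show {ω | ¬ D ω ≠ 0} = D ⁻¹' {0} by ext ω; simp]
    exact hm0.symm
  -- measurability and integrability of positive parts
  have hmeas_t : ∀ t : ℝ, AEStronglyMeasurable (fun ω => max (D ω + t * W ω) 0) P := fun t =>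
    ((hDae.add (aemeasurable_const.mul hWae)).max aemeasurable_const).aestronglyMeasurable
  have hmeasD0 : AEStronglyMeasurable (fun ω => max (D ω) 0) P :=
    (hDae.max aemeasurable_const).aestronglyMeasurable
  have habs : ∀ (x : ℝ), |max x 0| ≤ |x| := by
    intro x
    rcases le_total x 0 with h | h
    · rw [max_eq_right h]; simp
    · rw [max_eq_left h]
  have hint_t : ∀ t : ℝ, Integrable (fun ω => max (D ω + t * W ω) 0) P := by
    intro t
    apply (hDint.add (hWint.const_mul t)).mono (hmeas_t t)
    filter_upwards with ω
    simpa only [Real.norm_eq_abs, Pi.add_apply] using habs (D ω + t * W ω)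
  have hintD0 : Integrable (fun ω => max (D ω) 0) P := by
    apply hDint.mono hmeasD0
    filter_upwards with ω
    simpa only [Real.norm_eq_abs] using habs (D ω)
  -- dominated convergence
  have hDCT : Tendsto (fun t : ℝ => ∫ ω, (max (D ω + t * W ω) 0 - max (D ω) 0) / t ∂P)
      (nhdsWithin 0 {(0:ℝ)}ᶜ) (nhds (∫ ω, (if 0 < D ω then W ω else 0) ∂P)) := by
    apply tendsto_integral_filter_of_dominated_convergence (fun ω => |W ω|)
    · filter_upwards with t
      exact ((hmeas_t t).sub hmeasD0).mul_const t⁻¹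
    · filter_upwards [eventually_mem_nhdsWithin] with t ht
      have ht0 : t ≠ 0 := ht
      filter_upwards with ω
      rw [Real.norm_eq_abs, abs_div]
      have hb : |max (D ω + t * W ω) 0 - max (D ω) 0| ≤ |t * W ω| := by
        have h := abs_max_sub_max_le_abs (D ω + t * W ω) (D ω) 0
        simpa using h
      calc |max (D ω + t * W ω) 0 - max (D ω) 0| / |t| ≤ |t * W ω| / |t| := by
            exact div_le_div_of_nonneg_right hb (abs_nonneg t)
          _ = |W ω| := by
            rw [abs_mul, mul_comm, mul_div_assoc, div_self (abs_ne_zero.2 ht0), mul_one]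
    · exact hWint.abs
    · filter_upwards [hD0] with ω hω
      have hcont : Tendsto (fun t : ℝ => D ω + t * W ω) (nhds 0) (nhds (D ω)) := by
        have h : Continuous fun t : ℝ => D ω + t * W ω :=
          continuous_const.add (continuous_id.mul continuous_const)
        simpa using h.tendsto 0
      rcases lt_or_gt_of_ne hω with hneg | hpos
      · rw [if_neg (by linarith : ¬ 0 < D ω)]
        have hev : ∀ᶠ t in nhdsWithin (0:ℝ) {(0:ℝ)}ᶜ,
            (0:ℝ) = (max (D ω + t * W ω) 0 - max (D ω) 0) / t := by
          filter_upwards [eventually_nhdsWithin_of_eventually_nhds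
            (hcont.eventually_lt_const hneg)] with t hlt
          rw [max_eq_right hlt.le, max_eq_right (le_of_lt hneg)]
          simp
        exact Tendsto.congr' hev tendsto_const_nhds
      · rw [if_pos hpos]
        have hev : ∀ᶠ t in nhdsWithin (0:ℝ) {(0:ℝ)}ᶜ,
            W ω = (max (D ω + t * W ω) 0 - max (D ω) 0) / t := by
          filter_upwards [eventually_nhdsWithin_of_eventually_nhds
            (hcont.eventually_const_lt hpos), eventually_mem_nhdsWithin] with t hlt ht
          have ht0 : t ≠ 0 := ht
          rw [max_eq_left hlt.le, max_eq_left (le_of_lt hpos)]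
          field_simp
          ring
        exact Tendsto.congr' hev tendsto_const_nhds
  -- identify the limit with L via the slope of gfun
  have hg0 : gfun 0 = ∫ ω, max (D ω) 0 ∂P := by
    rw [hgfun_def]
    simp
  have hslope : (fun t : ℝ => ∫ ω, (max (D ω + t * W ω) 0 - max (D ω) 0) / t ∂P)
      =ᶠ[nhdsWithin (0:ℝ) {(0:ℝ)}ᶜ] slope gfun 0 := by
    filter_upwards [eventually_mem_nhdsWithin] with t ht
    have ht0 : t ≠ 0 := ht
    rw [slope_def_field]
    rw [show (∫ ω, (max (D ω + t * W ω) 0 - max (D ω) 0) / t ∂P)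
        = (∫ ω, (max (D ω + t * W ω) 0 - max (D ω) 0) ∂P) / t from integral_div t _]
    rw [integral_sub (hint_t t) hintD0, hg0, sub_zero]
  have hslopeT : Tendsto (slope gfun 0) (nhdsWithin 0 {(0:ℝ)}ᶜ) (nhds L) :=
    hasDerivAt_iff_tendsto_slope.1 hE
  have hlim : (∫ ω, (if 0 < D ω then W ω else 0) ∂P) = L :=
    tendsto_nhds_unique hDCT (Tendsto.congr' hslope.symm hslopeT)
  -- relate the set integral to the limit integral
  have hsetEq : {ω | νx ω + nx ω > νo ω + no ω} = {ω | 0 < D ω} := by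
    ext ω
    simp only [hD_def, Set.mem_setOf_eq, gt_iff_lt]
    constructor <;> intro h <;> linarith
  have hDD' : D =ᵐ[P] hDae.mk D := hDae.ae_eq_mk
  have hsets : {ω | 0 < D ω} =ᵐ[P] {ω | 0 < hDae.mk D ω} := by
    rw [Filter.eventuallyEq_set]
    filter_upwards [hDD'] with ω h
    simp [h]
  have hmeasSet : MeasurableSet {ω | 0 < hDae.mk D ω} := by
    have := hDae.measurable_mk (measurableSet_Ioi (a := (0:ℝ)))
    simpa [Set.preimage, Set.mem_Ioi] using this
  calc ∫ ω in {ω | νx ω + nx ω > νo ω + no ω}, νx ω ∂P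
      = ∫ ω in {ω | 0 < hDae.mk D ω}, W ω ∂P := by
        rw [hsetEq]
        exact setIntegral_congr_set hsets
    _ = ∫ ω, Set.indicator {ω | 0 < hDae.mk D ω} W ω ∂P := (integral_indicator hmeasSet).symm
    _ = ∫ ω, (if 0 < D ω then W ω else 0) ∂P := by
        apply integral_congr_ae
        filter_upwards [hDD'] with ω h
        rw [Set.indicator_apply]
        simp only [Set.mem_setOf_eq, ← h]
    _ = L := hlim
    _ = μx * (1 - stdNormalCDF ((μo - μx) / Real.sqrt v)) +
        (Kxx - Kxo) / Real.sqrt v * stdNormalPDF ((μo - μx) / Real.sqrt v) := by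
        rw [hL_def]
        rw [show stdNormalPDF (m / Real.sqrt v) = stdNormalPDF ((μo - μx) / Real.sqrt v) by
          rw [show (μo - μx) / Real.sqrt v = -(m / Real.sqrt v) by rw [hm_def]; ring, phi_even]]
        rw [show -m / Real.sqrt v = (μo - μx) / Real.sqrt v by rw [hm_def]; ring]
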